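/- Let p be a prime number and let a, b, c be positive rational numbers satisfying a² = p(b² + c²). Then θ = √(a + b√p) has degree 4 over ℚ, with minimal polynomial X⁴ − 2aX² + (a² − pb²). -/

import Mathlib

lemma aux_no_sqrt (p : ℕ) (hp : p.Prime) (x : ℚ) : (x:ℝ)^2 ≠ (p:ℝ) := by
  intro hx
  have hirr := Nat.Prime.irrational_sqrt hp
  have h1 : Real.sqrt p = |(x:ℝ)| := by rw [← hx, Real.sqrt_sq_eq_abs]
  rw [← Rat.cast_abs] at h1
  exact hirr ⟨|x|, h1.symm⟩

lemma aux_coeff (p : ℕ) (hp : p.Prime) (x y : ℚ)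
    (h : (x:ℝ) + (y:ℝ) * Real.sqrt p = 0) : x = 0 ∧ y = 0 := by
  have hirr := Nat.Prime.irrational_sqrt hp
  have hy : y = 0 := by
    by_contra hy
    have : Real.sqrt p = ((-x/y : ℚ) : ℝ) := by
      push_cast
      field_simp
      linarith [h]
    exact hirr ⟨-x/y, this.symm⟩
  refine ⟨?_, hy⟩
  rw [hy] at h; push_cast at h; simpa using h

lemma aux_theta (p : ℕ) (hp : p.Prime) (a b c : ℚ)
    (ha : 0 < a) (hb : 0 < b) (hc : 0 < c)
    (habc : a ^ 2 = (p : ℚ) * (b ^ 2 + c ^ 2)) (s t : ℚ)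
    (h : Real.sqrt ((a:ℝ) + (b:ℝ) * Real.sqrt p) = (s:ℝ) + (t:ℝ) * Real.sqrt p) :
    False := by
  have hsp : (Real.sqrt p) ^ 2 = (p:ℝ) := Real.sq_sqrt (by positivity)
  have hsppos : (0:ℝ) < Real.sqrt p := Real.sqrt_pos.2 (by exact_mod_cast hp.pos)
  have hpos : (0:ℝ) < (a:ℝ) + (b:ℝ) * Real.sqrt p := by positivity
  have hθ2 : (Real.sqrt ((a:ℝ) + (b:ℝ) * Real.sqrt p)) ^ 2 = (a:ℝ) + (b:ℝ) * Real.sqrt p :=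
    Real.sq_sqrt hpos.le
  rw [h] at hθ2
  -- (s + t√p)² = a + b√p  ⇒  (s²+pt² - a) + (2st - b)√p = 0
  have key : ((s^2 + p*t^2 - a : ℚ) : ℝ) + ((2*s*t - b : ℚ):ℝ) * Real.sqrt p = 0 := by
    push_cast
    nlinarith [hθ2, hsp]
  obtain ⟨h1, h2⟩ := aux_coeff p hp _ _ key
  have hs1 : s^2 + p*t^2 = a := by linarith [sub_eq_zero.mp (by linarith [h1] : s^2 + p*t^2 - a = 0)]
  have hs2 : 2*s*t = b := by linarith [h2]
  -- (s² - pt²)² = a² - pb² = pc²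
  have hkey : (s^2 - p*t^2)^2 = p * c^2 := by
    linear_combination (s^2 + (p:ℚ)*t^2 + a) * hs1 - (p:ℚ)*(2*s*t + b)*hs2 + habc
  have hx : (((s^2 - p*t^2)/c : ℚ) : ℝ)^2 = (p:ℝ) := by
    have : ((s^2 - p*t^2)/c)^2 = (p:ℚ) := by
      field_simp
      linarith [hkey]
    exact_mod_cast this
  exact aux_no_sqrt p hp _ hx

open Polynomial in
/-- If `p` is prime and `a, b, c` are positive rationals with
`a² = p (b² + c²)`, then `θ = √(a + b √p)` has degree `4` over `ℚ`, with
minimal polynomial `X⁴ - 2a X² + (a² - p b²)`. -/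
theorem minpoly_sqrt_add_sqrt (p : ℕ) (hp : p.Prime) (a b c : ℚ)
    (ha : 0 < a) (hb : 0 < b) (hc : 0 < c)
    (habc : a ^ 2 = (p : ℚ) * (b ^ 2 + c ^ 2)) :
    (minpoly ℚ (Real.sqrt ((a : ℝ) + (b : ℝ) * Real.sqrt (p : ℝ)))).natDegree = 4 ∧
      minpoly ℚ (Real.sqrt ((a : ℝ) + (b : ℝ) * Real.sqrt (p : ℝ))) =
        X ^ 4 - C (2 * a) * X ^ 2 + C (a ^ 2 - (p : ℚ) * b ^ 2) := by
  set sp := Real.sqrt (p:ℝ) with hsp_def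
  set θ := Real.sqrt ((a : ℝ) + (b : ℝ) * sp) with hθ_def
  have hirr := Nat.Prime.irrational_sqrt hp
  have hsp : sp ^ 2 = (p:ℝ) := Real.sq_sqrt (by positivity)
  have hsppos : (0:ℝ) < sp := Real.sqrt_pos.2 (by exact_mod_cast hp.pos)
  have hpos : (0:ℝ) < (a:ℝ) + (b:ℝ) * sp := by positivity
  have hθ2 : θ ^ 2 = (a:ℝ) + (b:ℝ) * sp := Real.sq_sqrt hpos.le
  set q : ℚ[X] := X ^ 4 - C (2 * a) * X ^ 2 + C (a ^ 2 - (p : ℚ) * b ^ 2) with hq_def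
  have hq_monic : q.Monic := by
    simp only [hq_def]; monicity!
  have hq_deg : q.natDegree = 4 := by
    simp only [hq_def]; compute_degree!
  have hroot : (aeval θ) q = 0 := by
    simp only [hq_def, map_sub, map_add, map_pow, map_mul, aeval_X, aeval_C, eq_ratCast]
    push_cast
    linear_combination (θ^2 + (a:ℝ) + (b:ℝ)*sp - 2*(a:ℝ)) * hθ2 + (b:ℝ)^2 * hsp
  have hint : IsIntegral ℚ θ := ⟨q, hq_monic, by rw [← aeval_def]; exact hroot⟩
  have hm_monic : (minpoly ℚ θ).Monic := minpoly.monic hint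
  have hm_dvd : minpoly ℚ θ ∣ q := minpoly.dvd ℚ θ hroot
  obtain ⟨r, hr⟩ := hm_dvd
  have hr_monic : r.Monic := hm_monic.of_mul_monic_left (hr ▸ hq_monic)
  have hsum : (minpoly ℚ θ).natDegree + r.natDegree = 4 := by
    rw [← hq_deg, hr, hm_monic.natDegree_mul hr_monic]
  have haev : (aeval θ) (minpoly ℚ θ) = 0 := minpoly.aeval ℚ θ
  have hd1 : 1 ≤ (minpoly ℚ θ).natDegree := minpoly.natDegree_pos hint
  have hd4 : (minpoly ℚ θ).natDegree ≤ 4 := by omega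
  interval_cases hd : (minpoly ℚ θ).natDegree
  · -- degree 1
    exfalso
    rw [Polynomial.aeval_eq_sum_range, hd] at haev
    simp [Finset.sum_range_succ, Rat.smul_def, hd ▸ hm_monic.coeff_natDegree] at haev
    refine aux_theta p hp a b c ha hb hc habc (-(minpoly ℚ θ).coeff 0) 0 ?_
    push_cast
    rw [← hsp_def, ← hθ_def]
    linarith [haev]
  · -- degree 2
    exfalso
    rw [Polynomial.aeval_eq_sum_range, hd] at haev
    simp [Finset.sum_range_succ, Rat.smul_def, hd ▸ hm_monic.coeff_natDegree] at haev
    set v := (minpoly ℚ θ).coeff 0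
    set u := (minpoly ℚ θ).coeff 1
    -- haev : ↑v + ↑u * θ + θ^2 = 0 (shape to check)
    by_cases hu : u = 0
    · have : sp = (((-v - a)/b : ℚ) : ℝ) := by
        rw [hu] at haev
        push_cast
        rw [hθ2] at haev
        push_cast at haev
        field_simp
        linarith [haev]
      exact hirr ⟨_, this.symm⟩
    · refine aux_theta p hp a b c ha hb hc habc (-(v+a)/u) (-b/u) ?_
      rw [← hsp_def, ← hθ_def]
      rw [hθ2] at haev
      have hu' : (u:ℝ) ≠ 0 := by exact_mod_cast hu
      push_cast
      field_simp
      linarith [haev]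
  · -- degree 3: r has a rational root
    exfalso
    have hrd : r.natDegree = 1 := by omega
    set s := -r.coeff 0 with hs_def
    have hrs : r.eval s = 0 := by
      rw [Polynomial.eval_eq_sum_range, hrd]
      simp [Finset.sum_range_succ, hrd ▸ hr_monic.coeff_natDegree, hs_def]
    have hqs : q.eval s = 0 := by
      rw [hr, Polynomial.eval_mul, hrs, mul_zero]
    rw [hq_def] at hqs
    simp only [Polynomial.eval_add, Polynomial.eval_sub, Polynomial.eval_mul,
      Polynomial.eval_pow, Polynomial.eval_X, Polynomial.eval_C] at hqs
    refine aux_no_sqrt p hp ((s^2 - a)/b) ?_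
    have : ((s^2 - a)/b)^2 = (p:ℚ) := by
      field_simp
      linear_combination hqs
    exact_mod_cast this
  · -- degree 4 : r = 1, minpoly = q
    have hr0 : r.natDegree = 0 := by omega
    have : r = 1 := hr_monic.natDegree_eq_zero.mp hr0
    rw [this, mul_one] at hr
    exact ⟨by omega, hr.symm⟩
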